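/- The Σ-product Σ(2^κ) = {x ∈ 2^κ : x has countable support} is a Fréchet–Urysohn space: for every A ⊆ Σ(2^κ) and every x in the closure of A, there is a sequence of points of A converging to x. In particular, Σ(2^κ) has countable tightness. -/
import Mathlib


open Cardinal Set Topology

universe u

/-- A free sequence of length `o` in the topology `t`: a transfinite sequence indexed by
the ordinals below `o` such that every initial segment's closure is disjoint from the
closure of the corresponding final segment. -/
def IsFreeSeqOn {X : Type u} (t : TopologicalSpace X) (o : Ordinal.{u})
    (x : {α : Ordinal.{u} // α < o} → X) : Prop :=
  ∀ i : {α : Ordinal.{u} // α < o},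
    @closure X t (x '' {j | j < i}) ∩ @closure X t (x '' {j | i ≤ j}) = ∅

/-- The tightness of a topology: the least infinite cardinal `κ` such that whenever a
point is in the closure of a set `A`, it is in the closure of a subset of `A` of
cardinality at most `κ`. -/
noncomputable def tightnessOf {X : Type u} (t : TopologicalSpace X) : Cardinal.{u} :=
  sInf {κ : Cardinal.{u} | ℵ₀ ≤ κ ∧ ∀ (A : Set X) (p : X), p ∈ @closure X t A →
    ∃ B ⊆ A, #↥B ≤ κ ∧ p ∈ @closure X t B}

/-- The Lindelöf number: the least infinite cardinal `κ` such that every open cover has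
a subcover of cardinality at most `κ`. -/
noncomputable def lindelofNumberOf {X : Type u} (t : TopologicalSpace X) : Cardinal.{u} :=
  sInf {κ : Cardinal.{u} | ℵ₀ ≤ κ ∧ ∀ 𝒰 : Set (Set X), (∀ U ∈ 𝒰, @IsOpen X t U) →
    ⋃₀ 𝒰 = Set.univ → ∃ 𝒱 ⊆ 𝒰, #↥𝒱 ≤ κ ∧ ⋃₀ 𝒱 = Set.univ}

/-- `F(X)`: the supremum of the cardinalities (lengths) of free sequences, at least ℵ₀. -/
noncomputable def freeNumberOf {X : Type u} (t : TopologicalSpace X) : Cardinal.{u} :=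
  ℵ₀ ⊔ sSup {c : Cardinal.{u} |
    ∃ x : {α : Ordinal.{u} // α < c.ord} → X, IsFreeSeqOn t c.ord x}

/-- The G_δ-modification: the topology generated by the G_δ-subsets. -/
def gDelta {X : Type u} (t : TopologicalSpace X) : TopologicalSpace X :=
  TopologicalSpace.generateFrom {s : Set X | @IsGδ X t s}

/-- `Cl_κ`-Lindelöf: every open `Cl_κ`-cover of any subset `W` contains a countable
subfamily covering `W`. -/
def ClLindelofOf {X : Type u} (t : TopologicalSpace X) (κ : Cardinal.{u}) : Prop :=
  ∀ (W : Set X) (𝒰 : Set (Set X)), (∀ U ∈ 𝒰, @IsOpen X t U) →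
    (∀ C ⊆ W, #↥C ≤ κ → ∃ U ∈ 𝒰, @closure X t C ⊆ U) →
    ∃ 𝒱 ⊆ 𝒰, 𝒱.Countable ∧ W ⊆ ⋃₀ 𝒱

section Aux

open Filter

private lemma countable_exists_finsets {ι : Type u} {s : Set ι} (hs : s.Countable) :
    ∃ E : ℕ → Finset ι, s ⊆ ⋃ n, ↑(E n) := by
  classical
  rcases s.eq_empty_or_nonempty with h | h
  · exact ⟨fun _ => ∅, by simp [h]⟩
  · obtain ⟨f, hf⟩ := hs.exists_eq_range h
    refine ⟨fun n => (Finset.range (n + 1)).image f, ?_⟩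
    rintro i hi
    rw [hf] at hi
    obtain ⟨n, rfl⟩ := hi
    exact Set.mem_iUnion.2 ⟨n, by simp only [Finset.coe_image, Set.mem_image,
      Finset.coe_range, Set.mem_Iio]; exact ⟨n, Nat.lt_succ_self n, rfl⟩⟩

private lemma sigma_key {ι : Type u}
    (A : Set {x : ι → Bool // (x ⁻¹' {true}).Countable})
    (p : {x : ι → Bool // (x ⁻¹' {true}).Countable}) (hp : p ∈ closure A) :
    ∃ u : ℕ → {x : ι → Bool // (x ⁻¹' {true}).Countable},
      (∀ n, u n ∈ A) ∧ Filter.Tendsto u Filter.atTop (nhds p) := by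
  classical
  have hg : ∀ F : Finset ι, ∃ a : {x : ι → Bool // (x ⁻¹' {true}).Countable}, a ∈ A ∧ ∀ i ∈ F, a.1 i = p.1 i := by
    intro F
    have hU : IsOpen {y : {x : ι → Bool // (x ⁻¹' {true}).Countable} | ∀ i ∈ F, y.1 i = p.1 i} := by
      have heq : {y : {x : ι → Bool // (x ⁻¹' {true}).Countable} | ∀ i ∈ F, y.1 i = p.1 i}
          = ⋂ i ∈ F, (fun y : {x : ι → Bool // (x ⁻¹' {true}).Countable} => y.1 i) ⁻¹' {p.1 i} := by
        ext y; simp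
      rw [heq]
      exact isOpen_biInter_finset fun i _ =>
        (isOpen_discrete _).preimage ((continuous_apply i).comp continuous_subtype_val)
    obtain ⟨a, ha, haA⟩ := mem_closure_iff.1 hp _ hU (fun i _ => rfl)
    exact ⟨a, haA, ha⟩
  choose g hgA hgE using hg
  have hD : ∀ y : {x : ι → Bool // (x ⁻¹' {true}).Countable}, {i | y.1 i ≠ p.1 i}.Countable := by
    intro y
    apply Set.Countable.mono ?_ (y.2.union p.2)
    intro i hi
    simp only [Set.mem_setOf_eq] at hi
    rcases Bool.eq_false_or_eq_true (y.1 i) with h | h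
    · left
      simp only [Set.mem_preimage, Set.mem_singleton_iff]
      exact h
    · right
      simp only [Set.mem_preimage, Set.mem_singleton_iff]
      cases hb : p.1 i
      · exact absurd (h.trans hb.symm) hi
      · rfl
  have hE : ∀ y : {x : ι → Bool // (x ⁻¹' {true}).Countable}, ∃ E : ℕ → Finset ι, {i | y.1 i ≠ p.1 i} ⊆ ⋃ n, ↑(E n) :=
    fun y => countable_exists_finsets (hD y)
  choose E hEc using hE
  let B : List {x : ι → Bool // (x ⁻¹' {true}).Countable} → ℕ → Finset ι := fun l n =>
    l.foldr (fun y F => F ∪ (Finset.range (n + 1)).biUnion (E y)) ∅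
  have hB : ∀ (l : List {x : ι → Bool // (x ⁻¹' {true}).Countable}) (n : ℕ) (y : {x : ι → Bool // (x ⁻¹' {true}).Countable}), y ∈ l → ∀ k ≤ n, E y k ⊆ B l n := by
    intro l n
    induction l with
    | nil => simp
    | cons z l ih =>
      intro y hy k hk i hi
      rcases List.mem_cons.1 hy with rfl | hy
      · exact Finset.mem_union.2 (Or.inr (Finset.mem_biUnion.2
          ⟨k, Finset.mem_range.2 (Nat.lt_succ_of_le hk), hi⟩))
      · exact Finset.mem_union.2 (Or.inl (ih y hy k hk hi))
  let L : ℕ → List {x : ι → Bool // (x ⁻¹' {true}).Countable} := fun n => Nat.rec [] (fun m l => l ++ [g (B l m)]) n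
  let u : ℕ → {x : ι → Bool // (x ⁻¹' {true}).Countable} := fun n => g (B (L n) n)
  have hL : ∀ n, L (n + 1) = L n ++ [u n] := fun n => rfl
  have humem : ∀ m n, m < n → u m ∈ L n := by
    intro m n hmn
    induction n with
    | zero => omega
    | succ n ih =>
      rw [hL]
      rcases Nat.lt_succ_iff_lt_or_eq.1 hmn with h | rfl
      · exact List.mem_append.2 (Or.inl (ih h))
      · exact List.mem_append.2 (Or.inr (List.mem_singleton.2 rfl))
  refine ⟨u, fun n => hgA _, ?_⟩
  rw [tendsto_subtype_rng, tendsto_pi_nhds]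
  intro i
  apply tendsto_nhds_of_eventually_eq
  by_cases hall : ∀ n, (u n).1 i = p.1 i
  · exact Eventually.of_forall hall
  · push_neg at hall
    obtain ⟨m, hm⟩ := hall
    obtain ⟨k, hk⟩ := Set.mem_iUnion.1 (hEc (u m) hm)
    filter_upwards [eventually_ge_atTop (max (m + 1) k)] with n hn
    have h1 : m < n := lt_of_lt_of_le (Nat.lt_succ_self m)
      (le_trans (le_max_left _ _) hn)
    have h2 : k ≤ n := le_trans (le_max_right _ _) hn
    exact hgE (B (L n) n) i (hB (L n) n (u m) (humem m n h1) k h2 hk)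

end Aux

/-- the Σ-product `Σ(2^κ)` is Fréchet–Urysohn; in particular it has
countable tightness. -/
theorem statement17 {ι : Type u} :
    FrechetUrysohnSpace {x : ι → Bool // (x ⁻¹' {true}).Countable} ∧
    tightnessOf (inferInstance :
      TopologicalSpace {x : ι → Bool // (x ⁻¹' {true}).Countable}) ≤ ℵ₀ := by
  have key := @sigma_key ι
  constructor
  · exact ⟨fun A p hp => key A p hp⟩
  · apply csInf_le'
    refine ⟨le_refl _, fun A p hp => ?_⟩
    obtain ⟨u, huA, hu⟩ := key A p hp
    refine ⟨Set.range u, Set.range_subset_iff.2 huA, Cardinal.mk_le_aleph0_iff.2 (Set.countable_range u).to_subtype, ?_⟩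
    exact mem_closure_of_tendsto hu (Filter.Eventually.of_forall fun n => Set.mem_range_self n)
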